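/- For all x ∈ 𝔽_{q^n}, L(x)^{q^t} = −h^{q^t−q}·L(x) and M(x)^{q^t} = h^{q^t−q^{t−1}}·M(x). Consequently the image of L equals {z ∈ 𝔽_{q^n} : z^{q^t} + h^{q^t−q}·z = 0} and the image of M equals {z ∈ 𝔽_{q^n} : z^{q^t} − h^{q^t−q^{t−1}}·z = 0}, and each of these two sets is a 1-dimensional 𝔽_{q^t}-subspace of 𝔽_{q^n}. -/

import Mathlib

/-- The map `L(x) = x^q - h^{1-q^{t+1}} x^{q^{t+1}}`, with `h^{1-q^j} = h / h^{q^j}`. -/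
def Lmap {F : Type*} [Field F] (q t : ℕ) (h : F) (x : F) : F :=
  x ^ q - h / h ^ q ^ (t + 1) * x ^ q ^ (t + 1)

/-- The map `M(x) = x^{q^{t-1}} + h^{1-q^{2t-1}} x^{q^{2t-1}}`, with `h^{1-q^j} = h / h^{q^j}`. -/
def Mmap {F : Type*} [Field F] (q t : ℕ) (h : F) (x : F) : F :=
  x ^ q ^ (t - 1) + h / h ^ q ^ (2 * t - 1) * x ^ q ^ (2 * t - 1)

private lemma ncard_pow_eq_mul_le {F : Type*} [Field F] (N : ℕ) (hN : 2 ≤ N) (a : F) :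
    ({z : F | z ^ N = a * z}).ncard ≤ N := by
  classical
  set P : Polynomial F := Polynomial.X ^ N - Polynomial.C a * Polynomial.X with hP
  have hPdeg : P.natDegree = N := by
    rw [hP, Polynomial.natDegree_sub_eq_left_of_natDegree_lt, Polynomial.natDegree_X_pow]
    rw [Polynomial.natDegree_X_pow]
    calc (Polynomial.C a * Polynomial.X).natDegree ≤ Polynomial.X.natDegree :=
          Polynomial.natDegree_C_mul_le a Polynomial.X
      _ = 1 := Polynomial.natDegree_X
      _ < N := by omega
  have hP0 : P ≠ 0 := by
    intro h0
    rw [h0, Polynomial.natDegree_zero] at hPdeg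
    omega
  have hsub : {z : F | z ^ N = a * z} ⊆ (↑P.roots.toFinset : Set F) := by
    intro z hz
    simp only [Set.mem_setOf_eq] at hz
    simp only [Finset.coe_sort_coe, Multiset.mem_toFinset, Finset.mem_coe]
    rw [Polynomial.mem_roots hP0]
    simp [Polynomial.IsRoot, hP, sub_eq_zero, hz]
  calc ({z : F | z ^ N = a * z}).ncard ≤ (↑P.roots.toFinset : Set F).ncard :=
        Set.ncard_le_ncard hsub (Set.toFinite _)
    _ = P.roots.toFinset.card := Set.ncard_coe_finset _
    _ ≤ Multiset.card P.roots := Multiset.toFinset_card_le _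
    _ ≤ P.natDegree := Polynomial.card_roots' P
    _ = N := hPdeg

private lemma aux_image {F : Type*} [Field F] [Fintype F] (N : ℕ) (hN : 2 ≤ N)
    (g : F → F) (hadd : ∀ x y, g (x + y) = g x + g y) (y0 a : F) (ha : a ≠ 0)
    (hker : ∀ x : F, g x = 0 → x ^ N = y0 * x)
    (hcardF : Fintype.card F = N * N)
    (heq : ∀ x : F, (g x) ^ N = a * g x) :
    ({z : F | ∃ x : F, g x = z} = {z : F | z ^ N = a * z}) ∧
    (∃ w : F, w ≠ 0 ∧ {z : F | ∃ x : F, g x = z} =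
      {z : F | ∃ c : F, c ^ N = c ∧ z = c * w}) := by
  classical
  have hN0 : 0 < N := by omega
  set f : F →+ F := AddMonoidHom.mk' g hadd with hf
  have hrange : {z : F | ∃ x : F, g x = z} = Set.range g := rfl
  -- kernel bound
  have hker_le : Nat.card f.ker ≤ N := by
    have hsubset : (f.ker : Set F) ⊆ {x : F | x ^ N = y0 * x} := by
      intro x hx
      exact hker x hx
    calc Nat.card f.ker = ((f.ker : Set F)).ncard := Nat.card_coe_set_eq _
      _ ≤ ({x : F | x ^ N = y0 * x}).ncard := Set.ncard_le_ncard hsubset (Set.toFinite _)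
      _ ≤ N := ncard_pow_eq_mul_le N hN y0
  have hker_pos : 0 < Nat.card f.ker := Nat.card_pos
  -- range cardinality
  have hiso : Nat.card (F ⧸ f.ker) = Nat.card f.range :=
    Nat.card_congr (QuotientAddGroup.quotientKerEquivRange f).toEquiv
  have hprod : Nat.card F = Nat.card (F ⧸ f.ker) * Nat.card f.ker :=
    AddSubgroup.card_eq_card_quotient_mul_card_addSubgroup f.ker
  have hrange_card : Nat.card f.range = (Set.range g).ncard := by
    rw [← Nat.card_coe_set_eq]
    rfl
  have hrange_ge : N ≤ (Set.range g).ncard := by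
    have h1 : N * N = (Set.range g).ncard * Nat.card f.ker := by
      rw [← hcardF, ← Nat.card_eq_fintype_card, hprod, hiso, hrange_card]
    have h2 : N * N ≤ (Set.range g).ncard * N :=
      h1 ▸ Nat.mul_le_mul_left _ hker_le
    exact Nat.le_of_mul_le_mul_right h2 hN0
  have hS_le : ({z : F | z ^ N = a * z}).ncard ≤ N := ncard_pow_eq_mul_le N hN a
  have hsub : Set.range g ⊆ {z : F | z ^ N = a * z} := by
    rintro z ⟨x, rfl⟩
    exact heq x
  have hSeq : Set.range g = {z : F | z ^ N = a * z} :=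
    Set.eq_of_subset_of_ncard_le hsub (le_trans hS_le hrange_ge) (Set.toFinite _)
  refine ⟨hrange.trans hSeq, ?_⟩
  obtain ⟨w, hwmem, hw0⟩ := Set.exists_ne_of_one_lt_ncard
    (lt_of_lt_of_le (by omega : 1 < N) hrange_ge) (0 : F)
  have hwS : w ^ N = a * w := by
    have := hSeq ▸ hwmem
    exact this
  refine ⟨w, hw0, ?_⟩
  rw [hrange, hSeq]
  ext z
  simp only [Set.mem_setOf_eq]
  constructor
  · intro hz
    refine ⟨z / w, ?_, (div_mul_cancel₀ z hw0).symm⟩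
    rw [div_pow, hz, hwS, mul_div_mul_left z w ha]
  · rintro ⟨c, hc, rfl⟩
    rw [mul_pow, hc, hwS]
    ring

/-- `L(x)^{q^t} = -h^{q^t-q} L(x)` and `M(x)^{q^t} = h^{q^t-q^{t-1}} M(x)`; consequently
`im L = {z : z^{q^t} + h^{q^t-q} z = 0}` and `im M = {z : z^{q^t} - h^{q^t-q^{t-1}} z = 0}`,
and each of these is a 1-dimensional `𝔽_{q^t}`-subspace of `𝔽_{q^n}`. -/
theorem stmt3 (p r q t : ℕ) (hp : p.Prime) (hpodd : Odd p) (hr : 0 < r)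
    (hq : q = p ^ r) (ht : 3 ≤ t)
    (F : Type*) [Field F] [Fintype F] (hcard : Fintype.card F = q ^ (2 * t))
    (h : F) (hh : h ^ (q ^ t + 1) = -1) :
    (∀ x : F, (Lmap q t h x) ^ q ^ t = -(h ^ q ^ t / h ^ q) * Lmap q t h x) ∧
    (∀ x : F, (Mmap q t h x) ^ q ^ t = h ^ q ^ t / h ^ q ^ (t - 1) * Mmap q t h x) ∧
    ({z : F | ∃ x : F, Lmap q t h x = z} =
      {z : F | z ^ q ^ t + h ^ q ^ t / h ^ q * z = 0}) ∧
    ({z : F | ∃ x : F, Mmap q t h x = z} =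
      {z : F | z ^ q ^ t - h ^ q ^ t / h ^ q ^ (t - 1) * z = 0}) ∧
    (∃ w : F, w ≠ 0 ∧ {z : F | ∃ x : F, Lmap q t h x = z} =
      {z : F | ∃ c : F, c ^ q ^ t = c ∧ z = c * w}) ∧
    (∃ w : F, w ≠ 0 ∧ {z : F | ∃ x : F, Mmap q t h x = z} =
      {z : F | ∃ c : F, c ^ q ^ t = c ∧ z = c * w}) := by
  classical
  haveI hpfact : Fact p.Prime := ⟨hp⟩
  have hq0 : 0 < q := hq ▸ pow_pos hp.pos r
  have hq2 : 2 ≤ q := by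
    rw [hq]
    calc 2 ≤ p := hp.two_le
      _ = p ^ 1 := (pow_one p).symm
      _ ≤ p ^ r := Nat.pow_le_pow_right hp.pos hr
  have hqodd : Odd q := hq ▸ hpodd.pow
  -- characteristic
  haveI hcharF : CharP F p := by
    obtain ⟨n, hchp, hcn⟩ := FiniteField.card F (ringChar F)
    have hdvd : ringChar F ∣ q ^ (2 * t) := by
      rw [← hcard, hcn]
      exact dvd_pow_self _ (by positivity)
    have : ringChar F ∣ p := by
      exact hchp.dvd_of_dvd_pow (by rw [hq, ← pow_mul] at hdvd; exact hdvd)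
    have hce : ringChar F = p := (Nat.prime_dvd_prime_iff_eq hchp hp).mp this
    rw [← hce]
    exact ringChar.charP F
  -- basic Frobenius facts
  have hqm : ∀ m : ℕ, q ^ m = p ^ (r * m) := fun m => by rw [hq, ← pow_mul]
  have frob_add : ∀ (m : ℕ) (x y : F), (x + y) ^ q ^ m = x ^ q ^ m + y ^ q ^ m := by
    intro m x y
    rw [hqm m]
    exact add_pow_char_pow x y p (r * m)
  have frob_sub : ∀ (m : ℕ) (x y : F), (x - y) ^ q ^ m = x ^ q ^ m - y ^ q ^ m := by
    intro m x y
    rw [hqm m]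
    exact sub_pow_char_pow x y (r * m)
  have frob_inj : ∀ (m : ℕ), m ≠ 0 → ∀ x y : F, x ^ q ^ m = y ^ q ^ m → x = y := by
    intro m hm x y hxy
    have h0 : (x - y) ^ q ^ m = 0 := by rw [frob_sub m, hxy, sub_self]
    have hxy0 : x - y = 0 := pow_eq_zero_iff (by positivity) |>.mp h0
    exact sub_eq_zero.mp hxy0
  have frob_surj : ∀ (m : ℕ), m ≠ 0 → ∀ y : F, ∃ x : F, x ^ q ^ m = y := by
    intro m hm
    have : Function.Surjective (fun x : F => x ^ q ^ m) :=
      Finite.injective_iff_surjective.mp (fun a b hab => frob_inj m hm a b hab)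
    exact this
  have pow_card : ∀ x : F, x ^ q ^ (2 * t) = x := fun x => by
    rw [← hcard]; exact FiniteField.pow_card x
  have ppow : ∀ (x : F) (a b : ℕ), (x ^ q ^ a) ^ q ^ b = x ^ q ^ (a + b) := fun x a b => by
    rw [← pow_mul, ← pow_add]
  have hred : ∀ (x : F) (a : ℕ), x ^ q ^ (2 * t + a) = x ^ q ^ a := fun x a => by
    rw [pow_add q, pow_mul, pow_card]
  have hh0 : h ≠ 0 := by
    intro h0
    rw [h0, zero_pow (by positivity)] at hh
    exact absurd hh (by norm_num)
  -- key multiplicative identities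
  have key1 : h ^ q ^ t * h = h ^ q * h ^ q ^ (t + 1) := by
    have e1 : h ^ q ^ t * h = -1 := by rw [← pow_succ]; exact hh
    have e2 : h ^ q * h ^ q ^ (t + 1) = -1 := by
      rw [← pow_add]
      have : q + q ^ (t + 1) = (q ^ t + 1) * q := by ring
      rw [this, pow_mul, hh, Odd.neg_one_pow hqodd]
    rw [e1, e2]
  have key2 : h ^ q ^ t * h = h ^ q ^ (t - 1) * h ^ q ^ (2 * t - 1) := by
    have e1 : h ^ q ^ t * h = -1 := by rw [← pow_succ]; exact hh
    have e2 : h ^ q ^ (t - 1) * h ^ q ^ (2 * t - 1) = -1 := by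
      rw [← pow_add]
      have h21 : q ^ (t - 1) + q ^ (2 * t - 1) = (q ^ t + 1) * q ^ (t - 1) := by
        have : 2 * t - 1 = t + (t - 1) := by omega
        rw [this, pow_add]
        ring
      rw [h21, pow_mul, hh, Odd.neg_one_pow (hqodd.pow)]
    rw [e1, e2]
  have hpowne : ∀ m : ℕ, h ^ m ≠ 0 := fun m => pow_ne_zero m hh0
  -- Part 1 : L
  have part1 : ∀ x : F, (Lmap q t h x) ^ q ^ t = -(h ^ q ^ t / h ^ q) * Lmap q t h x := by
    intro x
    unfold Lmap
    rw [frob_sub t, mul_pow, div_pow]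
    have e1 : (x ^ q) ^ q ^ t = x ^ q ^ (t + 1) := by
      rw [← pow_mul, ← pow_succ']
    have e2 : (x ^ q ^ (t + 1)) ^ q ^ t = x ^ q := by
      rw [ppow]
      have : t + 1 + t = 2 * t + 1 := by ring
      rw [this, hred, pow_one]
    have e3 : (h ^ q ^ (t + 1)) ^ q ^ t = h ^ q := by
      rw [ppow]
      have : t + 1 + t = 2 * t + 1 := by ring
      rw [this, hred, pow_one]
    rw [e1, e2, e3]
    have h1 : h ^ q ≠ 0 := hpowne _
    have h2 : h ^ q ^ (t + 1) ≠ 0 := hpowne _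
    field_simp
    linear_combination (-x ^ q ^ (t + 1)) * key1
  -- Part 2 : M
  have part2 : ∀ x : F, (Mmap q t h x) ^ q ^ t = h ^ q ^ t / h ^ q ^ (t - 1) * Mmap q t h x := by
    intro x
    unfold Mmap
    rw [frob_add t, mul_pow, div_pow]
    have e1 : (x ^ q ^ (t - 1)) ^ q ^ t = x ^ q ^ (2 * t - 1) := by
      rw [ppow]
      congr 2
      omega
    have e2 : (x ^ q ^ (2 * t - 1)) ^ q ^ t = x ^ q ^ (t - 1) := by
      rw [ppow]
      have : 2 * t - 1 + t = 2 * t + (t - 1) := by omega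
      rw [this, hred]
    have e3 : (h ^ q ^ (2 * t - 1)) ^ q ^ t = h ^ q ^ (t - 1) := by
      rw [ppow]
      have : 2 * t - 1 + t = 2 * t + (t - 1) := by omega
      rw [this, hred]
    rw [e1, e2, e3]
    have h1 : h ^ q ^ (t - 1) ≠ 0 := hpowne _
    have h2 : h ^ q ^ (2 * t - 1) ≠ 0 := hpowne _
    field_simp
    linear_combination (-x ^ q ^ (2 * t - 1)) * key2
  -- set up aux applications
  have hN2 : 2 ≤ q ^ t := by
    calc 2 ≤ q := hq2
      _ = q ^ 1 := (pow_one q).symm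
      _ ≤ q ^ t := Nat.pow_le_pow_right hq0 (by omega)
  have hcardF' : Fintype.card F = q ^ t * q ^ t := by rw [hcard, two_mul, pow_add]
  -- L application
  have haddL : ∀ x y : F, Lmap q t h (x + y) = Lmap q t h x + Lmap q t h y := by
    intro x y
    unfold Lmap
    have e1 : (x + y) ^ q = x ^ q + y ^ q := by
      have := frob_add 1 x y
      simpa using this
    rw [e1, frob_add (t + 1)]
    ring
  obtain ⟨y0, hy0⟩ := frob_surj 1 one_ne_zero (h ^ q ^ (t + 1) / h)
  rw [pow_one] at hy0
  have hkerL : ∀ x : F, Lmap q t h x = 0 → x ^ q ^ t = y0 * x := by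
    intro x hx
    unfold Lmap at hx
    have hx' : x ^ q ^ (t + 1) = (y0 * x) ^ q := by
      rw [mul_pow, hy0]
      rw [sub_eq_zero] at hx
      have h2 : h ^ q ^ (t + 1) ≠ 0 := hpowne _
      field_simp at hx ⊢
      linear_combination -hx
    apply frob_inj 1 one_ne_zero
    rw [pow_one]
    rw [← hx', ← pow_mul, ← pow_succ]
  have haL : -(h ^ q ^ t / h ^ q) ≠ 0 := by
    simp only [ne_eq, neg_eq_zero, div_eq_zero_iff, not_or]
    exact ⟨hpowne _, hpowne _⟩
  obtain ⟨himL, hwL⟩ := aux_image (q ^ t) hN2 (Lmap q t h) haddL y0 _ haL hkerL hcardF' part1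
  -- M application
  have haddM : ∀ x y : F, Mmap q t h (x + y) = Mmap q t h x + Mmap q t h y := by
    intro x y
    unfold Mmap
    rw [frob_add (t - 1), frob_add (2 * t - 1)]
    ring
  obtain ⟨y1, hy1⟩ := frob_surj (t - 1) (by omega) (-(h ^ q ^ (2 * t - 1) / h))
  have hkerM : ∀ x : F, Mmap q t h x = 0 → x ^ q ^ t = y1 * x := by
    intro x hx
    unfold Mmap at hx
    have hx' : x ^ q ^ (2 * t - 1) = (y1 * x) ^ q ^ (t - 1) := by
      rw [mul_pow, hy1]
      have h2 : h ^ q ^ (2 * t - 1) ≠ 0 := hpowne _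
      field_simp at hx ⊢
      linear_combination hx
    apply frob_inj (t - 1) (by omega)
    rw [← hx', ← pow_mul, ← pow_add]
    congr 2
    omega
  have haM : h ^ q ^ t / h ^ q ^ (t - 1) ≠ 0 := div_ne_zero (hpowne _) (hpowne _)
  obtain ⟨himM, hwM⟩ := aux_image (q ^ t) hN2 (Mmap q t h) haddM y1 _ haM hkerM hcardF' part2
  refine ⟨part1, part2, ?_, ?_, hwL, hwM⟩
  · rw [himL]
    ext z
    simp only [Set.mem_setOf_eq, neg_mul, eq_neg_iff_add_eq_zero]
  · rw [himM]
    ext z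
    simp only [Set.mem_setOf_eq]
    exact sub_eq_zero.symm
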